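/- Let $\gamma \in (0,1)$ and $a \ge 0$. Then $\int_0^{2\pi} (a + x)^{\gamma - 1} \cos(x)\, dx \ge 0$ (the integral converges absolutely since $\gamma - 1 > -1$). -/

import Mathlib

open MeasureTheory Real

/-- Auxiliary: for `p < 0`, `0 < b ≤ c`, `0 ≤ d`:
`c^p - (c+d)^p ≤ b^p - (b+d)^p` (convexity-type inequality). -/
lemma aux_rpow_gap (p : ℝ) (hp : p < 0) (b c d : ℝ) (hb : 0 < b) (hbc : b ≤ c)
    (hd : 0 ≤ d) : c ^ p - (c + d) ^ p ≤ b ^ p - (b + d) ^ p := by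
  have hderiv : ∀ t ∈ interior (Set.Icc b c),
      HasDerivAt (fun t : ℝ => t ^ p - (t + d) ^ p)
        (p * t ^ (p - 1) - p * (t + d) ^ (p - 1)) t := by
    intro t ht
    rw [interior_Icc] at ht
    have ht0 : 0 < t := hb.trans ht.1
    have htd : 0 < t + d := by linarith
    have h1 : HasDerivAt (fun t : ℝ => t ^ p) (p * t ^ (p - 1)) t := by
      simpa [mul_comm] using Real.hasDerivAt_rpow_const (x := t) (p := p) (Or.inl ht0.ne')
    have h2 : HasDerivAt (fun t : ℝ => (t + d) ^ p) (p * (t + d) ^ (p - 1)) t := by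
      have := (Real.hasDerivAt_rpow_const (x := t + d) (p := p) (Or.inl htd.ne')).comp t
        ((hasDerivAt_id t).add_const d)
      simpa [mul_comm, Function.comp_def] using this
    exact h1.sub h2
  have hanti : AntitoneOn (fun t : ℝ => t ^ p - (t + d) ^ p) (Set.Icc b c) := by
    apply antitoneOn_of_deriv_nonpos (convex_Icc b c)
    · apply ContinuousOn.sub
      · exact continuousOn_id.rpow_const (fun x hx => Or.inl (hb.trans_le hx.1).ne')
      · exact ((continuous_add_right d).continuousOn).rpow_const
          (fun x hx => Or.inl (by nlinarith [hx.1] : (0:ℝ) < x + d).ne')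
    · intro t ht
      exact (hderiv t ht).differentiableAt.differentiableWithinAt
    · intro t ht
      rw [(hderiv t ht).deriv]
      rw [interior_Icc] at ht
      have ht0 : 0 < t := hb.trans ht.1
      have : (t + d) ^ (p - 1) ≤ t ^ (p - 1) :=
        Real.rpow_le_rpow_of_nonpos ht0 (by linarith) (by linarith)
      nlinarith
  exact hanti (Set.left_mem_Icc.mpr hbc) (Set.right_mem_Icc.mpr hbc) hbc

/-- For `γ ∈ (0,1)` and `a ≥ 0`, `∫_0^{2π} (a+x)^{γ-1} cos x dx ≥ 0`. -/
theorem integral_shifted_rpow_cos_nonneg (γ : ℝ) (hγ : γ ∈ Set.Ioo (0 : ℝ) 1)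
    (a : ℝ) (ha : 0 ≤ a) :
    0 ≤ ∫ x in (0 : ℝ)..(2 * π), (a + x) ^ (γ - 1) * Real.cos x := by
  obtain ⟨hγ0, hγ1⟩ := hγ
  have hp0 : γ - 1 < 0 := by linarith
  have hp1 : (-1 : ℝ) < γ - 1 := by linarith
  set p := γ - 1 with hp
  have hπ : (0:ℝ) < π := Real.pi_pos
  set f : ℝ → ℝ := fun x => (a + x) ^ p with hf
  -- integrability of f x * cos x on any subinterval
  have hint : ∀ u v : ℝ, IntervalIntegrable
      (fun x => f x * Real.cos x) volume u v := by
    intro u v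
    have h1 : IntervalIntegrable (fun x : ℝ => x ^ p) volume (u + a) (v + a) :=
      intervalIntegral.intervalIntegrable_rpow' hp1
    have h2 : IntervalIntegrable (fun x : ℝ => (x + a) ^ p) volume u v := by
      simpa using h1.comp_add_right a
    have h2' : IntervalIntegrable f volume u v := by
      simpa [hf, add_comm] using h2
    exact h2'.mul_continuousOn Real.continuousOn_cos
  have hint2 : ∀ u v : ℝ, IntervalIntegrable
      (fun x => f (x + π) * Real.cos x) volume u v := by
    intro u v
    have h2 : IntervalIntegrable (fun x => f (x + π) * Real.cos (x + π)) volume u v := by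
      simpa using (hint (u + π) (v + π)).comp_add_right π
    have := h2.neg
    apply this.congr
    intro x _
    show -(f (x + π) * Real.cos (x + π)) = f (x + π) * Real.cos x
    rw [Real.cos_add_pi]; ring
  -- step 1: fold [π, 2π] onto [0, π]
  have step1 : (∫ x in (0:ℝ)..(2 * π), f x * Real.cos x)
      = ∫ x in (0:ℝ)..π, (f x - f (x + π)) * Real.cos x := by
    have hsplit : (∫ x in (0:ℝ)..(2 * π), f x * Real.cos x)
        = (∫ x in (0:ℝ)..π, f x * Real.cos x) + ∫ x in π..(2*π), f x * Real.cos x := by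
      rw [intervalIntegral.integral_add_adjacent_intervals (hint 0 π) (hint π (2*π))]
    have hsub : (∫ x in π..(2*π), f x * Real.cos x)
        = -∫ x in (0:ℝ)..π, f (x + π) * Real.cos x := by
      have e1 : (∫ x in (0:ℝ)..π, f (x + π) * Real.cos (x + π))
          = ∫ x in π..(2*π), f x * Real.cos x := by
        rw [intervalIntegral.integral_comp_add_right (fun x => f x * Real.cos x) π]
        rw [show (0:ℝ) + π = π by ring, show π + π = 2 * π by ring]
      rw [← e1, ← intervalIntegral.integral_neg]
      apply intervalIntegral.integral_congr
      intro x _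
      show f (x + π) * Real.cos (x + π) = -(f (x + π) * Real.cos x)
      rw [Real.cos_add_pi]; ring
    rw [hsplit, hsub]
    simp only [sub_mul]
    rw [intervalIntegral.integral_sub (hint 0 π) (hint2 0 π)]
    ring
  -- step 2: fold [π/2, π] onto [0, π/2]
  set g : ℝ → ℝ := fun x => f x - f (x + π) with hg
  have hgint : ∀ u v : ℝ, IntervalIntegrable (fun x => g x * Real.cos x) volume u v := by
    intro u v
    have := (hint u v).sub (hint2 u v)
    apply this.congr
    intro x _
    show f x * Real.cos x - f (x + π) * Real.cos x = g x * Real.cos x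
    simp only [hg]; ring
  have hgint2 : IntervalIntegrable (fun x => g (π - x) * Real.cos x) volume 0 (π/2) := by
    have h2 : IntervalIntegrable (fun x => g (π - x) * Real.cos (π - x)) volume 0 (π/2) := by
      have := (hgint (π - 0) (π - π/2)).comp_sub_left π
      simpa using this
    apply h2.neg.congr
    intro x _
    show -(g (π - x) * Real.cos (π - x)) = g (π - x) * Real.cos x
    rw [Real.cos_pi_sub]; ring
  have step2 : (∫ x in (0:ℝ)..π, g x * Real.cos x)
      = ∫ x in (0:ℝ)..(π/2), (g x - g (π - x)) * Real.cos x := by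
    have hsplit : (∫ x in (0:ℝ)..π, g x * Real.cos x)
        = (∫ x in (0:ℝ)..(π/2), g x * Real.cos x)
          + ∫ x in (π/2)..π, g x * Real.cos x := by
      rw [intervalIntegral.integral_add_adjacent_intervals (hgint 0 (π/2)) (hgint (π/2) π)]
    have hsub : (∫ x in (π/2)..π, g x * Real.cos x)
        = -∫ x in (0:ℝ)..(π/2), g (π - x) * Real.cos x := by
      have e1 : (∫ x in (0:ℝ)..(π/2), g (π - x) * Real.cos (π - x))
          = ∫ x in (π/2)..π, g x * Real.cos x := by
        rw [intervalIntegral.integral_comp_sub_left (fun x => g x * Real.cos x) π]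
        rw [show π - π/2 = π/2 by ring, show π - (0:ℝ) = π by ring]
      rw [← e1, ← intervalIntegral.integral_neg]
      apply intervalIntegral.integral_congr
      intro x _
      show g (π - x) * Real.cos (π - x) = -(g (π - x) * Real.cos x)
      rw [Real.cos_pi_sub]; ring
    rw [hsplit, hsub]
    simp only [sub_mul]
    rw [intervalIntegral.integral_sub (hgint 0 (π/2)) hgint2]
    ring
  show (0:ℝ) ≤ ∫ x in (0:ℝ)..(2 * π), f x * Real.cos x
  rw [step1, step2]
  -- step 3: nonnegativity of the integrand a.e. on [0, π/2]
  apply intervalIntegral.integral_nonneg_of_ae_restrict (by linarith)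
  have h0 : (volume.restrict (Set.Icc (0:ℝ) (π/2))) {(0:ℝ)} = 0 :=
    le_antisymm (le_trans (Measure.restrict_apply_le _ _) (by simp)) zero_le
  filter_upwards [self_mem_ae_restrict measurableSet_Icc,
    measure_eq_zero_iff_ae_notMem.mp h0] with x hx hx0
  have hx1 : 0 < x := lt_of_le_of_ne hx.1 (fun h => hx0 (by simp [← h]))
  have hx2 : x ≤ π / 2 := hx.2
  have hcos : 0 ≤ Real.cos x := Real.cos_nonneg_of_mem_Icc ⟨by linarith, hx2⟩
  apply mul_nonneg _ hcos
  have key : f (π - x) - f (π - x + π) ≤ f x - f (x + π) := by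
    have hb : 0 < a + x := by linarith
    have hbc : a + x ≤ a + (π - x) := by linarith
    have := aux_rpow_gap p hp0 (a + x) (a + (π - x)) π hb hbc hπ.le
    simpa [hf, add_assoc] using this
  simp only [hg, sub_nonneg]
  exact key
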